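/- arXiv:1207.4252 — 2 statements merged into one kernel-verified Lean document; each statement's English description precedes it below -/
import Mathlib

section
/- Consider the minimization over K-tuples of 2×2 real positive semidefinite matrices V_1,…,V_K with tr(V_j)=1, of f(V) = Σ_{j=1}^K tr(V_j²) + 2α Σ_{1≤j<i≤K} tr(V_j V_i), where 0<α<1. The minimum is attained at V_j = (1/2)I for all j, and the minimal value equals K/2 + α·K(K−1)/2. -/
open Matrix Finset

/-- The objective `∑ tr(V_j²) + 2α ∑_{j<i} tr(V_j V_i)`. -/
noncomputable def objF {K : ℕ} (α : ℝ) (V : Fin K → Matrix (Fin 2) (Fin 2) ℝ) : ℝ :=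
  (∑ j, (V j * V j).trace) + 2 * α * ∑ j, ∑ i ∈ Finset.Ioi j, (V j * V i).trace

lemma sym_sum_split {K : ℕ} (t : Fin K → Fin K → ℝ) (hs : ∀ i j, t i j = t j i) :
    ∑ i, ∑ j, t i j = (∑ i, t i i) + 2 * ∑ i, ∑ j ∈ Finset.Ioi i, t i j := by
  have hrow : ∀ i : Fin K, ∑ j, t i j
      = t i i + ∑ j ∈ Finset.Ioi i, t i j + ∑ j ∈ Finset.Iio i, t i j := by
    intro i
    have hU : Finset.Ioi i ∪ Finset.Iio i = Finset.univ.erase i := by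
      ext j
      simp [lt_or_lt_iff_ne, ne_comm, eq_comm]
    have h1 : ∑ j ∈ Finset.univ.erase i, t i j + t i i = ∑ j, t i j :=
      Finset.sum_erase_add _ _ (Finset.mem_univ i)
    rw [← hU, Finset.sum_union (Finset.disjoint_Ioi_Iio i)] at h1
    linarith
  have hswap : ∑ i, ∑ j ∈ Finset.Iio i, t i j = ∑ i, ∑ j ∈ Finset.Ioi i, t i j := by
    rw [Finset.sum_sigma', Finset.sum_sigma']
    refine Finset.sum_nbij' (i := fun p => ⟨p.2, p.1⟩) (j := fun p => ⟨p.2, p.1⟩)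
      ?_ ?_ ?_ ?_ ?_ <;>
      simp_all [Finset.mem_sigma, Finset.mem_Ioi, Finset.mem_Iio]
  calc ∑ i, ∑ j, t i j
      = ∑ i, (t i i + ∑ j ∈ Finset.Ioi i, t i j + ∑ j ∈ Finset.Iio i, t i j) :=
        Finset.sum_congr rfl fun i _ => hrow i
    _ = _ := by rw [Finset.sum_add_distrib, Finset.sum_add_distrib, hswap]; ring

lemma trace_sq_ge {M : Matrix (Fin 2) (Fin 2) ℝ} (hM : M.IsHermitian) :
    M.trace ^ 2 / 2 ≤ (M * M).trace := by
  have hsym : M 1 0 = M 0 1 := by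
    have := congrFun (congrFun hM 0) 1
    simpa [Matrix.conjTranspose_apply] using this
  simp [Matrix.trace, Matrix.mul_apply, Matrix.diag, Fin.sum_univ_two, hsym]
  nlinarith [sq_nonneg (M 0 0 - M 1 1), sq_nonneg (M 0 1)]

/-- Minimizing `∑ tr(V_j²) + 2α ∑_{j<i} tr(V_j V_i)` over K-tuples of 2×2 PSD
matrices of trace 1: the minimum is attained at `V_j = (1/2) I` for all `j`, and
the minimal value is `K/2 + α K(K−1)/2`. -/
theorem stmt3 (K : ℕ) (hK : 1 ≤ K) (α : ℝ) (hα : 0 < α) (hα1 : α < 1) :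
    IsLeast {y : ℝ | ∃ V : Fin K → Matrix (Fin 2) (Fin 2) ℝ,
        (∀ j, (V j).PosSemidef ∧ (V j).trace = 1) ∧ y = objF α V}
      ((K : ℝ) / 2 + α * (K * (K - 1)) / 2) ∧
    objF (K := K) α (fun _ : Fin K => (1 / 2 : ℝ) • (1 : Matrix (Fin 2) (Fin 2) ℝ))
      = (K : ℝ) / 2 + α * (K * (K - 1)) / 2 := by
  -- value at the candidate point
  have hval : objF (K := K) α (fun _ : Fin K => (1 / 2 : ℝ) • (1 : Matrix (Fin 2) (Fin 2) ℝ))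
      = (K : ℝ) / 2 + α * (K * (K - 1)) / 2 := by
    have htr : (((1 / 2 : ℝ) • (1 : Matrix (Fin 2) (Fin 2) ℝ)) *
        ((1 / 2 : ℝ) • (1 : Matrix (Fin 2) (Fin 2) ℝ))).trace = (1 / 2 : ℝ) := by
      simp [Matrix.smul_mul, Matrix.mul_smul, Matrix.trace_smul, Matrix.trace_one]
    have hsplit := sym_sum_split (K := K) (fun _ _ => (1 / 2 : ℝ)) (fun _ _ => rfl)
    simp only [Finset.sum_const, Finset.card_univ, Fintype.card_fin, nsmul_eq_mul] at hsplit
    unfold objF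
    simp only [htr]
    simp only [Finset.sum_const, Finset.card_univ, Fintype.card_fin, nsmul_eq_mul]
    have hK1 : (1 : ℝ) ≤ (K : ℝ) := by exact_mod_cast hK
    nlinarith [hsplit]
  refine ⟨⟨⟨fun _ => (1 / 2 : ℝ) • (1 : Matrix (Fin 2) (Fin 2) ℝ), fun j => ⟨?_, ?_⟩, hval.symm⟩, ?_⟩, hval⟩
  · refine ⟨by simp [Matrix.IsHermitian], fun x => ?_⟩
    exact ((Matrix.PosSemidef.one (n := Fin 2) (R := ℝ)).smul (by norm_num : (0:ℝ) ≤ 1 / 2)).2 x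
  · simp [Matrix.trace_smul, Matrix.trace_one]
  · rintro y ⟨V, hV, rfl⟩
    set S : Matrix (Fin 2) (Fin 2) ℝ := ∑ j, V j with hS
    have hSherm : S.IsHermitian := by
      rw [hS]
      unfold Matrix.IsHermitian
      rw [Matrix.conjTranspose_sum]
      exact Finset.sum_congr rfl fun j _ => (hV j).1.1
    have hStr : S.trace = (K : ℝ) := by
      rw [hS, Matrix.trace_sum]
      simp [(fun j => (hV j).2)]
    -- tr(S²) = ∑∑ tr(V_j V_i)
    have hSS : (S * S).trace = ∑ j, ∑ i, (V j * V i).trace := by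
      rw [hS, Finset.sum_mul_sum, Matrix.trace_sum]
      exact Finset.sum_congr rfl fun j _ => Matrix.trace_sum _ _
    have hsym : ∀ j i : Fin K, (V j * V i).trace = (V i * V j).trace :=
      fun j i => Matrix.trace_mul_comm _ _
    have hsplit := sym_sum_split (fun j i => (V j * V i).trace) hsym
    rw [hsplit] at hSS
    -- bounds
    have hdiag : (K : ℝ) / 2 ≤ ∑ j, (V j * V j).trace := by
      have : ∀ j : Fin K, (1 : ℝ) / 2 ≤ (V j * V j).trace := by
        intro j
        have := trace_sq_ge (hV j).1.1
        rw [(hV j).2] at this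
        linarith
      calc (K : ℝ) / 2 = ∑ _j : Fin K, (1 : ℝ) / 2 := by
            simp [Finset.sum_const]; ring
        _ ≤ _ := Finset.sum_le_sum fun j _ => this j
    have hSbound : (K : ℝ) ^ 2 / 2 ≤ (S * S).trace := by
      have := trace_sq_ge hSherm
      rw [hStr] at this
      linarith
    -- combine: objF = (1-α) ∑ tr(V_j²) + α tr(S²)
    have hobj : objF α V = (1 - α) * (∑ j, (V j * V j).trace) + α * (S * S).trace := by
      unfold objF
      rw [hSS]; ring
    rw [hobj]
    have h1 : (1 - α) * ((K : ℝ) / 2) ≤ (1 - α) * ∑ j, (V j * V j).trace :=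
      mul_le_mul_of_nonneg_left hdiag (by linarith)
    have h2 : α * ((K : ℝ) ^ 2 / 2) ≤ α * (S * S).trace :=
      mul_le_mul_of_nonneg_left hSbound (le_of_lt hα)
    nlinarith
end

section
/- For treating interference as noise with sum rate R_sum(P) = Σ_{j=1}^K log(1 + c_j P/(K + P·d_j)), where c_j = |C_jj|² and d_j = Σ_{i≠j}|C_ji|², the wideband slope S_0 = −2(Ṙ_sum(0))²/R̈_sum(0) equals 2(Σ_j c_j)²/(Σ_j (c_j² + 2 d_j c_j)). -/
open Finset

private lemma hasDerivAt_affine (K b P : ℝ) :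
    HasDerivAt (fun x : ℝ => K + x * b) b P := by
  simpa using (hasDerivAt_mul_const b).const_add K

private lemma hasDerivAt_logAffine {K b P : ℝ} (h : K + P * b ≠ 0) :
    HasDerivAt (fun x : ℝ => Real.log (K + x * b)) (b / (K + P * b)) P := by
  have := (Real.hasDerivAt_log h).comp P (hasDerivAt_affine K b P)
  simpa [div_eq_inv_mul, Function.comp_def] using this

private lemma hasDerivAt_invAffine {K b P : ℝ} (h : K + P * b ≠ 0) :
    HasDerivAt (fun x : ℝ => b / (K + x * b)) (-(b * b) / (K + P * b) ^ 2) P := by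
  have := (hasDerivAt_const P b).div (hasDerivAt_affine K b P) h
  simpa [Pi.div_def] using this

/-- For treating interference as noise with
`R_sum(P) = ∑ log(1 + c_j P/(K + P d_j))`, the wideband slope
`−2 Ṙ(0)² / R̈(0)` equals `2 (∑ c_j)² / ∑ (c_j² + 2 d_j c_j)`. -/
theorem stmt11 (K : ℕ) (hK : 1 ≤ K) (c d : Fin K → ℝ)
    (hc : ∀ j, 0 < c j) (hd : ∀ j, 0 ≤ d j) :
    let Rsum : ℝ → ℝ := fun P => ∑ j, Real.log (1 + c j * P / ((K : ℝ) + P * d j));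
    -2 * (deriv Rsum 0) ^ 2 / deriv (deriv Rsum) 0 = 2 * (∑ j, c j) ^ 2 / (∑ j, ((c j) ^ 2 + 2 * d j * c j)) := by
  intro Rsum
  have hK0 : (0 : ℝ) < (K : ℝ) := by exact_mod_cast hK
  set a : Fin K → ℝ := fun j => c j + d j with ha
  set G : ℝ → ℝ := fun P => ∑ j, (Real.log ((K : ℝ) + P * a j) - Real.log ((K : ℝ) + P * d j)) with hG
  set H : ℝ → ℝ := fun P => ∑ j, (a j / ((K : ℝ) + P * a j) - d j / ((K : ℝ) + P * d j)) with hH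
  -- a neighborhood where all denominators are positive
  have hnb : ∀ᶠ P in nhds (0 : ℝ), ∀ j, 0 < (K : ℝ) + P * a j ∧ 0 < (K : ℝ) + P * d j := by
    rw [Filter.eventually_all]
    intro j
    have h1 : ContinuousAt (fun P : ℝ => (K : ℝ) + P * a j) 0 := by fun_prop
    have h2 : ContinuousAt (fun P : ℝ => (K : ℝ) + P * d j) 0 := by fun_prop
    have e1 := h1.eventually (eventually_gt_nhds (show (0:ℝ) < (K:ℝ) + 0 * a j by simpa using hK0))
    have e2 := h2.eventually (eventually_gt_nhds (show (0:ℝ) < (K:ℝ) + 0 * d j by simpa using hK0))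
    filter_upwards [e1, e2] with P hp1 hp2
    exact ⟨hp1, hp2⟩
  -- Rsum agrees with G near 0
  have hRG : Rsum =ᶠ[nhds (0 : ℝ)] G := by
    filter_upwards [hnb] with P hp
    refine Finset.sum_congr rfl fun j _ => ?_
    have h1 := (hp j).1
    have h2 := (hp j).2
    rw [← Real.log_div (ne_of_gt h1) (ne_of_gt h2)]
    congr 1
    field_simp [ha]
    ring
  -- deriv G agrees with H near 0
  have hGH : deriv G =ᶠ[nhds (0 : ℝ)] H := by
    filter_upwards [hnb] with P hp
    have : HasDerivAt G (H P) P := by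
      apply HasDerivAt.fun_sum
      intro j _
      exact (hasDerivAt_logAffine (ne_of_gt (hp j).1)).sub
        (hasDerivAt_logAffine (ne_of_gt (hp j).2))
    exact this.deriv
  have hRH : deriv Rsum =ᶠ[nhds (0 : ℝ)] H := (hRG.deriv).trans hGH
  -- first derivative value
  have h1val : deriv Rsum 0 = (∑ j, c j) / (K : ℝ) := by
    have := hRH.self_of_nhds
    rw [this, hH]
    simp only [zero_mul, add_zero]
    refine (Finset.sum_congr rfl fun j _ => ?_).trans (Finset.sum_div _ _ _).symm
    rw [div_sub_div_same]; simp [ha]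
  -- second derivative value
  have h2val : deriv (deriv Rsum) 0 = -(∑ j, ((c j) ^ 2 + 2 * d j * c j)) / (K : ℝ) ^ 2 := by
    rw [hRH.deriv_eq]
    have : HasDerivAt H (∑ j, (-(a j * a j) / ((K : ℝ)) ^ 2 - -(d j * d j) / ((K : ℝ)) ^ 2)) 0 := by
      apply HasDerivAt.fun_sum
      intro j _
      have hne1 : (K : ℝ) + 0 * a j ≠ 0 := by simpa using ne_of_gt hK0
      have hne2 : (K : ℝ) + 0 * d j ≠ 0 := by simpa using ne_of_gt hK0
      have := (hasDerivAt_invAffine hne1).sub (hasDerivAt_invAffine hne2)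
      simpa [Pi.sub_def] using this
    rw [this.deriv]
    refine (Finset.sum_congr rfl fun j _ =>
        show _ = -(c j ^ 2 + 2 * d j * c j) / (K : ℝ) ^ 2 from ?_).trans ?_
    · rw [div_sub_div_same]
      congr 1
      simp only [ha]
      ring
    · rw [neg_div, ← Finset.sum_div, Finset.sum_neg_distrib, neg_div]
  rw [h1val, h2val]
  have hSpos : 0 < ∑ j, ((c j) ^ 2 + 2 * d j * c j) := by
    apply Finset.sum_pos
    · intro j _
      have := hc j
      have := hd j
      positivity
    · exact Finset.univ_nonempty_iff.mpr ⟨⟨0, hK⟩⟩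
  have hK0' : (K : ℝ) ≠ 0 := ne_of_gt hK0
  have hS : (∑ j, ((c j) ^ 2 + 2 * d j * c j)) ≠ 0 := ne_of_gt hSpos
  field_simp
end
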